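/- Let (α_n)_{n∈ℕ} be a sequence of complex numbers with |α_n| = 1 for all n, and let C_α be the conjugation on ℓ²(ℕ, ℂ) defined coefficientwise by (C_α a)_n = α_n² conj(a_n). Let T be a Toeplitz operator on ℓ²(ℕ, ℂ) with symbol coefficients φ_k (k ∈ ℤ). Then T is C_α-symmetric (C_α T* C_α = T) if and only if φ_{m−n} = α_m² · conj(α_n)² · φ_{n−m} for all m, n ∈ ℕ. -/

import Mathlib

noncomputable section
open scoped ComplexConjugate
open ContinuousLinearMap

/-- A conjugation on a complex Hilbert space: an antilinear, involutive, isometric map. -/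
def IsConjugation {E : Type*} [NormedAddCommGroup E] [InnerProductSpace ℂ E] (C : E → E) : Prop :=
  (∀ (a : ℂ) (f g : E), C (a • f + g) = conj a • C f + C g) ∧
  (∀ f, C (C f) = f) ∧
  (∀ f, ‖C f‖ = ‖f‖)

/-- The inner product in the paper's convention: linear in the first argument and
conjugate-linear in the second (Mathlib's `inner` with the arguments swapped). -/
def ip {E : Type*} [NormedAddCommGroup E] [InnerProductSpace ℂ E] (x y : E) : ℂ :=
  inner ℂ y x

/-- `ℓ²(ℕ, ℂ)`, identified with the Hardy space `H²(𝔻)` via Taylor coefficients. -/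
abbrev Ell2 : Type := lp (fun _ : ℕ => ℂ) 2

/-- The standard orthonormal basis of `ℓ²(ℕ, ℂ)`. -/
def e (n : ℕ) : Ell2 := lp.single 2 n 1

lemma coef_eq_inner (y : Ell2) (m : ℕ) : y m = (inner ℂ (e m) y : ℂ) := by
  rw [e, lp.inner_single_left]
  simp

/-- Let `(α_n)` be unimodular complex numbers and `C_α` the conjugation on
`ℓ²(ℕ, ℂ)` given by `(C_α a)_n = α_n² conj(a_n)`.  A Toeplitz operator `T` with symbol
coefficients `φ_k` is `C_α`-symmetric if and only if
`φ_{m−n} = α_m² conj(α_n)² φ_{n−m}` for all `m, n ∈ ℕ`. -/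
theorem c_alpha_symmetric_iff
    (α : ℕ → ℂ) (hα : ∀ n, ‖α n‖ = 1)
    (C : Ell2 → Ell2) (hC : IsConjugation C)
    (hCdef : ∀ (a : Ell2) (n : ℕ), C a n = (α n) ^ 2 * conj (a n))
    (S₀ T : Ell2 →L[ℂ] Ell2) (hS₀ : ∀ n, S₀ (e n) = e (n + 1))
    (hT : (adjoint S₀).comp (T.comp S₀) = T)
    (φ : ℤ → ℂ) (hφ : ∀ m n : ℕ, φ ((m : ℤ) - (n : ℤ)) = ip (T (e n)) (e m)) :
    (∀ x, C (adjoint T (C x)) = T x) ↔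
      ∀ m n : ℕ, φ ((m : ℤ) - (n : ℤ)) = (α m) ^ 2 * (conj (α n)) ^ 2 * φ ((n : ℤ) - (m : ℤ)) := by
  have entryT : ∀ m n : ℕ, (T (e n)) m = φ ((m : ℤ) - (n : ℤ)) := by
    intro m n
    rw [hφ, ip, coef_eq_inner]
  have entryTadj : ∀ m n : ℕ, ((adjoint T) (e n)) m = conj (φ ((n : ℤ) - (m : ℤ))) := by
    intro m n
    rw [coef_eq_inner, adjoint_inner_right, ← inner_conj_symm, ← coef_eq_inner, entryT]
  constructor
  · intro H m n
    have h1 : C (e n) = (α n) ^ 2 • e n := by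
      apply lp.ext; funext k
      rw [lp.coeFn_smul, Pi.smul_apply, hCdef]
      rcases eq_or_ne k n with rfl | hk
      · simp [e, lp.single_apply_self]
      · simp [e, lp.single_apply_ne _ _ _ hk, Pi.single_apply, hk]
    calc φ ((m : ℤ) - (n : ℤ)) = (T (e n)) m := (entryT m n).symm
      _ = (C ((adjoint T) (C (e n)))) m := by rw [H]
      _ = (α m) ^ 2 * conj (((adjoint T) (C (e n))) m) := hCdef _ m
      _ = (α m) ^ 2 * conj (((α n) ^ 2 • (adjoint T) (e n)) m) := by rw [h1, map_smul]
      _ = (α m) ^ 2 * conj ((α n) ^ 2 * ((adjoint T) (e n)) m) := by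
            rw [lp.coeFn_smul, Pi.smul_apply, smul_eq_mul]
      _ = (α m) ^ 2 * (conj (α n)) ^ 2 * φ ((n : ℤ) - (m : ℤ)) := by
            rw [entryTadj, map_mul, map_pow, Complex.conj_conj]; ring
  · intro H x
    apply lp.ext; funext m
    have key : ∀ n : ℕ, (α m) ^ 2 * (inner ℂ ((C x) n) ((T (e m)) n) : ℂ)
        = inner ℂ (((adjoint T) (e m)) n) (x n) := by
      intro n
      simp only [RCLike.inner_apply]
      rw [hCdef, entryT, entryTadj, map_mul, map_pow, Complex.conj_conj, Complex.conj_conj,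
        H m n]
      ring
    have lhs : (C ((adjoint T) (C x))) m = (α m) ^ 2 * (inner ℂ (C x) (T (e m)) : ℂ) := by
      rw [hCdef]
      congr 1
      rw [coef_eq_inner ((adjoint T) (C x)) m, adjoint_inner_right, inner_conj_symm]
    have rhs : (T x) m = (inner ℂ ((adjoint T) (e m)) x : ℂ) := by
      rw [coef_eq_inner, ← adjoint_inner_left]
    rw [lhs, rhs, lp.inner_eq_tsum, lp.inner_eq_tsum, ← tsum_mul_left]
    exact tsum_congr fun n => key n
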